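/- arXiv:1009.2199 — 3 statements merged into one kernel-verified Lean document; each statement's English description precedes it below -/
import Mathlib

section
/- If M is an ideal in an affine semigroup A ⊆ ℤ^d, then M can be written as a finite disjoint union of translates fᵢ + Fᵢ, where each Fᵢ is a face of A and each fᵢ ∈ ℤ^d; that is, M possesses an affine stratification in which each stratum is a translate of a face of A. -/
open Pointwise

namespace AffineStratificationAux

variable {d : ℕ}

/-- `I` is an ideal of the submonoid `B`. -/
def IsIdeal (B : AddSubmonoid (Fin d → ℤ)) (I : Set (Fin d → ℤ)) : Prop :=
  I ⊆ (B : Set (Fin d → ℤ)) ∧ ∀ x ∈ I, ∀ b ∈ B, x + b ∈ I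

/-- `S` is a finite disjoint union of translates of faces of `B`. -/
def IsDecomp (B : AddSubmonoid (Fin d → ℤ)) (S : Set (Fin d → ℤ)) : Prop :=
  ∃ (r : ℕ) (f : Fin r → (Fin d → ℤ)) (F : Fin r → AddSubmonoid (Fin d → ℤ)),
    (∀ i, F i ≤ B ∧ ∀ a b, a ∈ B → b ∈ B → a + b ∈ F i → a ∈ F i ∧ b ∈ F i) ∧
    (Pairwise fun i j => Disjoint
      (({f i} : Set (Fin d → ℤ)) + (F i : Set (Fin d → ℤ)))
      (({f j} : Set (Fin d → ℤ)) + (F j : Set (Fin d → ℤ)))) ∧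
    S = ⋃ i, (({f i} : Set (Fin d → ℤ)) + (F i : Set (Fin d → ℤ)))

theorem mem_singleton_add {x y : Fin d → ℤ} {s : Set (Fin d → ℤ)} :
    y ∈ ({x} : Set (Fin d → ℤ)) + s ↔ ∃ b ∈ s, x + b = y := by
  rw [Set.singleton_add, Set.mem_image]

/-- Well-foundedness of reverse strict inclusion on ideals of a f.g. submonoid of `ℤ^d`
(Dickson / Noetherianity). -/
theorem wf_ideals (B : AddSubmonoid (Fin d → ℤ)) (hB : B.FG) :
    WellFounded (fun I J : {I : Set (Fin d → ℤ) // IsIdeal B I} => J.1 ⊂ I.1) := by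
  classical
  obtain ⟨s, hs⟩ := hB
  set n := s.card with hn
  set g : Fin n → (Fin d → ℤ) := fun i => (s.equivFin.symm i : Fin d → ℤ) with hg
  have hrange : Set.range g = (s : Set (Fin d → ℤ)) := by
    ext x
    constructor
    · rintro ⟨i, rfl⟩; exact (s.equivFin.symm i).2
    · intro hx; exact ⟨s.equivFin ⟨x, hx⟩, by simp [hg]⟩
  set π : (Fin n →₀ ℕ) → (Fin d → ℤ) := fun u => ∑ i, (u i) • g i with hπ
  have hπadd : ∀ u v, π (u + v) = π u + π v := by
    intro u v
    show ∑ i, ((u + v) i) • g i = (∑ i, (u i) • g i) + ∑ i, (v i) • g i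
    simp only [Finsupp.add_apply, add_smul]
    exact Finset.sum_add_distrib
  have hπB : ∀ u, π u ∈ B := by
    intro u
    refine AddSubmonoid.sum_mem B fun i _ => AddSubmonoid.nsmul_mem B ?_ _
    have : g i ∈ (s : Set (Fin d → ℤ)) := hrange ▸ Set.mem_range_self i
    exact hs ▸ AddSubmonoid.subset_closure this
  have hπsurj : ∀ x ∈ B, ∃ u, π u = x := by
    intro x hx
    rw [← hs] at hx
    induction hx using AddSubmonoid.closure_induction with
    | mem y hy =>
      rw [← hrange] at hy
      obtain ⟨i, rfl⟩ := hy
      refine ⟨Finsupp.single i 1, ?_⟩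
      show ∑ j, (Finsupp.single i 1) j • g j = g i
      simp [Finsupp.single_apply, ite_smul]
    | zero =>
      refine ⟨0, ?_⟩
      show ∑ i, (0 : Fin n →₀ ℕ) i • g i = 0
      simp
    | add a b _ _ ha hb =>
      obtain ⟨u, hu⟩ := ha
      obtain ⟨v, hv⟩ := hb
      exact ⟨u + v, by rw [hπadd, hu, hv]⟩
  have hmono : ∀ (I : Set (Fin d → ℤ)), IsIdeal B I → ∀ u v : Fin n →₀ ℕ,
      u ≤ v → π u ∈ I → π v ∈ I := by
    intro I hI u v huv hu
    have hv : v = u + (v - u) := (add_tsub_cancel_of_le huv).symm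
    rw [hv, hπadd]
    exact hI.2 _ hu _ (hπB _)
  set Φ : {I : Set (Fin d → ℤ) // IsIdeal B I} → Ideal (MvPolynomial (Fin n) ℚ) :=
    fun I => Ideal.span ((fun u => MvPolynomial.monomial u (1 : ℚ)) ''
      {u : Fin n →₀ ℕ | π u ∈ I.1}) with hΦ
  have key : ∀ I J : {I : Set (Fin d → ℤ) // IsIdeal B I}, J.1 ⊂ I.1 → Φ J < Φ I := by
    intro I J hIJ
    have hle : Φ J ≤ Φ I := by
      apply Ideal.span_mono
      apply Set.image_mono
      intro u hu
      exact hIJ.1 hu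
    obtain ⟨x, hxI, hxJ⟩ := Set.exists_of_ssubset hIJ
    obtain ⟨u, rfl⟩ := hπsurj x (I.2.1 hxI)
    refine lt_of_le_of_ne hle fun heq => ?_
    have hmem : MvPolynomial.monomial u (1 : ℚ) ∈ Φ I :=
      Ideal.subset_span ⟨u, hxI, rfl⟩
    rw [← heq] at hmem
    rw [hΦ, MvPolynomial.mem_ideal_span_monomial_image] at hmem
    have hu : u ∈ (MvPolynomial.monomial u (1 : ℚ)).support := by
      rw [MvPolynomial.support_monomial, if_neg one_ne_zero]
      exact Finset.mem_singleton_self u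
    obtain ⟨v, hv, hvu⟩ := hmem u hu
    exact hxJ (hmono J.1 J.2 v u hvu hv)
  have hwfI : WellFounded (fun a b : Ideal (MvPolynomial (Fin n) ℚ) => b < a) :=
    wellFounded_gt
  exact Subrelation.wf (fun {x y} h => key x y h) (InvImage.wf Φ hwfI)

/-- The stratum `{f} + F` as a set. -/
def stratum (f : Fin d → ℤ) (F : AddSubmonoid (Fin d → ℤ)) : Set (Fin d → ℤ) :=
  ({f} : Set (Fin d → ℤ)) + (F : Set (Fin d → ℤ))

theorem isDecomp_empty (B : AddSubmonoid (Fin d → ℤ)) : IsDecomp B ∅ := by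
  refine ⟨0, Fin.elim0, Fin.elim0, fun i => i.elim0, fun i => i.elim0, ?_⟩
  simp

theorem isDecomp_single (B : AddSubmonoid (Fin d → ℤ)) (f0 : Fin d → ℤ)
    (F0 : AddSubmonoid (Fin d → ℤ)) (hle : F0 ≤ B)
    (hface : ∀ a b, a ∈ B → b ∈ B → a + b ∈ F0 → a ∈ F0 ∧ b ∈ F0) :
    IsDecomp B (({f0} : Set (Fin d → ℤ)) + (F0 : Set (Fin d → ℤ))) := by
  refine ⟨1, fun _ => f0, fun _ => F0, fun _ => ⟨hle, hface⟩, ?_, ?_⟩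
  · intro i j hij
    exact absurd (Subsingleton.elim i j) hij
  · simp [Set.iUnion_const]

theorem isDecomp_union {B : AddSubmonoid (Fin d → ℤ)} {S₁ S₂ : Set (Fin d → ℤ)}
    (h1 : IsDecomp B S₁) (h2 : IsDecomp B S₂) (hd : Disjoint S₁ S₂) :
    IsDecomp B (S₁ ∪ S₂) := by
  obtain ⟨r₁, f₁, F₁, hface₁, hdisj₁, huni₁⟩ := h1
  obtain ⟨r₂, f₂, F₂, hface₂, hdisj₂, huni₂⟩ := h2
  set e := (finSumFinEquiv : Fin r₁ ⊕ Fin r₂ ≃ Fin (r₁ + r₂)) with he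
  set st : Fin r₁ ⊕ Fin r₂ → Set (Fin d → ℤ) := fun x =>
    ({Sum.elim f₁ f₂ x} : Set (Fin d → ℤ)) + ((Sum.elim F₁ F₂ x : AddSubmonoid (Fin d → ℤ)) :
      Set (Fin d → ℤ)) with hst
  have hsub₁ : ∀ a, st (Sum.inl a) ⊆ S₁ := by
    intro a
    rw [huni₁]
    exact Set.subset_iUnion (fun i => ({f₁ i} : Set (Fin d → ℤ)) + (F₁ i : Set (Fin d → ℤ))) a
  have hsub₂ : ∀ a, st (Sum.inr a) ⊆ S₂ := by
    intro a
    rw [huni₂]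
    exact Set.subset_iUnion (fun i => ({f₂ i} : Set (Fin d → ℤ)) + (F₂ i : Set (Fin d → ℤ))) a
  have hstdisj : ∀ x y : Fin r₁ ⊕ Fin r₂, x ≠ y → Disjoint (st x) (st y) := by
    rintro (x | x) (y | y) hxy
    · exact hdisj₁ (fun h => hxy (by rw [h]))
    · exact hd.mono (hsub₁ x) (hsub₂ y)
    · exact (hd.symm).mono (hsub₂ x) (hsub₁ y)
    · exact hdisj₂ (fun h => hxy (by rw [h]))
  refine ⟨r₁ + r₂, fun i => Sum.elim f₁ f₂ (e.symm i), fun i => Sum.elim F₁ F₂ (e.symm i),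
    ?_, ?_, ?_⟩
  · have hall : ∀ x : Fin r₁ ⊕ Fin r₂, Sum.elim F₁ F₂ x ≤ B ∧ ∀ a b, a ∈ B → b ∈ B →
        a + b ∈ Sum.elim F₁ F₂ x → a ∈ Sum.elim F₁ F₂ x ∧ b ∈ Sum.elim F₁ F₂ x := by
      rintro (x | x)
      · exact hface₁ x
      · exact hface₂ x
    exact fun i => hall (e.symm i)
  · intro i j hij
    exact hstdisj _ _ (fun h => hij (by simpa using congrArg e h))
  · have : ⋃ i, st (e.symm i) = ⋃ x, st x := e.symm.surjective.iSup_comp st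
    rw [show (⋃ i, (({Sum.elim f₁ f₂ (e.symm i)} : Set (Fin d → ℤ)) +
        ((Sum.elim F₁ F₂ (e.symm i) : AddSubmonoid (Fin d → ℤ)) : Set (Fin d → ℤ)))) =
        ⋃ i, st (e.symm i) from rfl, this, Set.iUnion_sum]
    simp only [hst, Sum.elim_inl, Sum.elim_inr]
    rw [← huni₁, ← huni₂]

theorem disjoint_singleton_add {X Y : Set (Fin d → ℤ)} (a : Fin d → ℤ) (h : Disjoint X Y) :
    Disjoint (({a} : Set (Fin d → ℤ)) + X) (({a} : Set (Fin d → ℤ)) + Y) := by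
  rw [Set.singleton_add, Set.singleton_add]
  exact Set.disjoint_image_of_injective (add_right_injective a) h

theorem singleton_add_iUnion {ι : Sort*} (a : Fin d → ℤ) (t : ι → Set (Fin d → ℤ)) :
    (({a} : Set (Fin d → ℤ)) + ⋃ i, t i) = ⋃ i, (({a} : Set (Fin d → ℤ)) + t i) := by
  simp only [Set.singleton_add, Set.image_iUnion]

theorem isDecomp_translate {B : AddSubmonoid (Fin d → ℤ)} {S : Set (Fin d → ℤ)}
    (a : Fin d → ℤ) (h : IsDecomp B S) :
    IsDecomp B (({a} : Set (Fin d → ℤ)) + S) := by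
  obtain ⟨r, f, F, hface, hdisj, huni⟩ := h
  have hkey : ∀ i, ({a + f i} : Set (Fin d → ℤ)) + (F i : Set (Fin d → ℤ)) =
      ({a} : Set (Fin d → ℤ)) + (({f i} : Set (Fin d → ℤ)) + (F i : Set (Fin d → ℤ))) := by
    intro i
    rw [← add_assoc, Set.singleton_add_singleton]
  refine ⟨r, fun i => a + f i, F, hface, ?_, ?_⟩
  · intro i j hij
    rw [hkey i, hkey j]
    exact disjoint_singleton_add a (hdisj hij)
  · rw [huni, singleton_add_iUnion]
    exact Set.iUnion_congr fun i => (hkey i).symm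

/-- Core result: the complement of an ideal in `B` is a finite disjoint union of
translates of faces. Proof by Noetherian induction, peeling off a translate of the
face associated with a maximal colon ideal. -/
theorem isDecomp_sdiff (B : AddSubmonoid (Fin d → ℤ)) (hB : B.FG) :
    ∀ I : Set (Fin d → ℤ), IsIdeal B I → IsDecomp B ((B : Set (Fin d → ℤ)) \ I) := by
  classical
  have hwf := wf_ideals B hB
  suffices h : ∀ J : {I : Set (Fin d → ℤ) // IsIdeal B I},
      IsDecomp B ((B : Set (Fin d → ℤ)) \ J.1) by
    intro I hI; exact h ⟨I, hI⟩
  intro J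
  refine hwf.induction
    (C := fun J : {I : Set (Fin d → ℤ) // IsIdeal B I} =>
      IsDecomp B ((B : Set (Fin d → ℤ)) \ J.1)) J ?_
  clear J
  rintro ⟨I, hI⟩ IH
  simp only at IH ⊢
  by_cases hne : ((B : Set (Fin d → ℤ)) \ I) = ∅
  · rw [hne]; exact isDecomp_empty B
  obtain ⟨y0, hy0⟩ := Set.nonempty_iff_ne_empty.2 hne
  set colon : (Fin d → ℤ) → Set (Fin d → ℤ) := fun x => {b | b ∈ B ∧ x + b ∈ I} with hcolon
  have hcolon_ideal : ∀ x, IsIdeal B (colon x) := by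
    intro x
    constructor
    · intro b hb; exact hb.1
    · intro b hb c hc
      refine ⟨B.add_mem hb.1 hc, ?_⟩
      have := hI.2 _ hb.2 c hc
      rwa [add_assoc] at this
  set fam : Set {I' : Set (Fin d → ℤ) // IsIdeal B I'} :=
    {J | ∃ x, x ∈ (B : Set (Fin d → ℤ)) \ I ∧ J.1 = colon x} with hfam
  have hfam_ne : fam.Nonempty := ⟨⟨colon y0, hcolon_ideal y0⟩, y0, hy0, rfl⟩
  obtain ⟨Jm, ⟨x0, hx0, hJm⟩, hmax⟩ := hwf.has_min fam hfam_ne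
  have hcolon_eq : ∀ a ∈ B, x0 + a ∉ I → colon (x0 + a) = colon x0 := by
    intro a ha hxa
    have hsub : colon x0 ⊆ colon (x0 + a) := by
      rintro c ⟨hcB, hcI⟩
      refine ⟨hcB, ?_⟩
      have h1 := hI.2 _ hcI a ha
      rwa [add_right_comm] at h1
    have hmem : (⟨colon (x0 + a), hcolon_ideal _⟩ :
        {I' : Set (Fin d → ℤ) // IsIdeal B I'}) ∈ fam :=
      ⟨x0 + a, ⟨B.add_mem hx0.1 ha, hxa⟩, rfl⟩
    have hnss := hmax _ hmem
    rw [hJm] at hnss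
    by_contra hne'
    exact hnss (HasSubset.Subset.ssubset_of_ne hsub fun h => hne' h.symm)
  set F0 : AddSubmonoid (Fin d → ℤ) :=
    { carrier := {b | b ∈ B ∧ x0 + b ∉ I}
      zero_mem' := ⟨B.zero_mem, by simpa using hx0.2⟩
      add_mem' := by
        rintro a b ⟨haB, haI⟩ ⟨hbB, hbI⟩
        refine ⟨B.add_mem haB hbB, fun hab => ?_⟩
        have hb' : b ∉ colon x0 := fun hc => hbI hc.2
        rw [← hcolon_eq a haB haI] at hb'
        exact hb' ⟨hbB, by rwa [← add_assoc] at hab⟩ } with hF0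
  have hF0mem : ∀ b, b ∈ F0 ↔ (b ∈ B ∧ x0 + b ∉ I) := fun b => Iff.rfl
  have hF0le : F0 ≤ B := fun b hb => ((hF0mem b).1 hb).1
  have hF0face : ∀ a b, a ∈ B → b ∈ B → a + b ∈ F0 → a ∈ F0 ∧ b ∈ F0 := by
    intro a b ha hb hab
    obtain ⟨-, hnab⟩ := (hF0mem _).1 hab
    constructor
    · refine (hF0mem a).2 ⟨ha, fun h => hnab ?_⟩
      have := hI.2 _ h b hb
      rwa [add_assoc] at this
    · refine (hF0mem b).2 ⟨hb, fun h => hnab ?_⟩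
      have := hI.2 _ h a ha
      rwa [add_right_comm, add_assoc] at this
  set I' : Set (Fin d → ℤ) := I ∪ (({x0} : Set (Fin d → ℤ)) + (B : Set (Fin d → ℤ))) with hI'def
  have hI' : IsIdeal B I' := by
    constructor
    · rintro y (hy | hy)
      · exact hI.1 hy
      · obtain ⟨b, hb, rfl⟩ := mem_singleton_add.1 hy
        exact B.add_mem hx0.1 hb
    · rintro y (hy | hy) b hb
      · exact Or.inl (hI.2 _ hy b hb)
      · obtain ⟨c, hc, rfl⟩ := mem_singleton_add.1 hy
        exact Or.inr (mem_singleton_add.2 ⟨c + b, B.add_mem hc hb, (add_assoc _ _ _).symm⟩)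
  have hss : I ⊂ I' := by
    refine HasSubset.Subset.ssubset_of_ne Set.subset_union_left fun h => ?_
    have : x0 ∈ I' := Or.inr (mem_singleton_add.2 ⟨0, B.zero_mem, add_zero x0⟩)
    rw [← h] at this
    exact hx0.2 this
  have hdec' := IH ⟨I', hI'⟩ hss
  have hstrat_sub : (({x0} : Set (Fin d → ℤ)) + (F0 : Set (Fin d → ℤ)))
      ⊆ (B : Set (Fin d → ℤ)) \ I := by
    intro y hy
    obtain ⟨b, hb, rfl⟩ := mem_singleton_add.1 hy
    obtain ⟨hbB, hbI⟩ := (hF0mem b).1 hb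
    exact ⟨B.add_mem hx0.1 hbB, hbI⟩
  have hcover : (B : Set (Fin d → ℤ)) \ I =
      (({x0} : Set (Fin d → ℤ)) + (F0 : Set (Fin d → ℤ))) ∪ ((B : Set (Fin d → ℤ)) \ I') := by
    ext y
    constructor
    · rintro ⟨hyB, hyI⟩
      by_cases hy : y ∈ ({x0} : Set (Fin d → ℤ)) + (B : Set (Fin d → ℤ))
      · obtain ⟨b, hb, rfl⟩ := mem_singleton_add.1 hy
        exact Or.inl (mem_singleton_add.2 ⟨b, (hF0mem b).2 ⟨hb, hyI⟩, rfl⟩)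
      · exact Or.inr ⟨hyB, fun h => h.elim hyI hy⟩
    · rintro (hy | hy)
      · exact hstrat_sub hy
      · exact ⟨hy.1, fun h => hy.2 (Or.inl h)⟩
  have hdisj : Disjoint (({x0} : Set (Fin d → ℤ)) + (F0 : Set (Fin d → ℤ)))
      ((B : Set (Fin d → ℤ)) \ I') := by
    rw [Set.disjoint_left]
    intro y hy hy'
    obtain ⟨b, hb, rfl⟩ := mem_singleton_add.1 hy
    exact hy'.2 (Or.inr (mem_singleton_add.2 ⟨b, (hF0mem b).1 hb |>.1, rfl⟩))
  rw [hcover]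
  exact isDecomp_union (isDecomp_single B x0 F0 hF0le hF0face) hdec' hdisj

theorem isDecomp_biUnion (B : AddSubmonoid (Fin d → ℤ)) (hB : B.FG) (E : Finset (Fin d → ℤ)) :
    IsDecomp B (⋃ x ∈ E, ({x} : Set (Fin d → ℤ)) + (B : Set (Fin d → ℤ))) := by
  classical
  induction E using Finset.induction_on with
  | empty => simpa using isDecomp_empty B
  | @insert a E ha IH =>
    set S' := ⋃ x ∈ E, ({x} : Set (Fin d → ℤ)) + (B : Set (Fin d → ℤ)) with hS'
    have hS'abs : ∀ y ∈ S', ∀ c ∈ B, y + c ∈ S' := by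
      intro y hy c hc
      rw [hS', Set.mem_iUnion₂] at hy ⊢
      obtain ⟨x, hx, hyx⟩ := hy
      obtain ⟨b, hb, rfl⟩ := mem_singleton_add.1 hyx
      exact ⟨x, hx, mem_singleton_add.2 ⟨b + c, B.add_mem hb hc, (add_assoc _ _ _).symm⟩⟩
    set I : Set (Fin d → ℤ) := {b | b ∈ B ∧ a + b ∈ S'} with hIdef
    have hIideal : IsIdeal B I := by
      constructor
      · intro b hb; exact hb.1
      · intro b hb c hc
        refine ⟨B.add_mem hb.1 hc, ?_⟩
        have := hS'abs _ hb.2 c hc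
        rwa [add_assoc] at this
    have hsplit : (⋃ x ∈ insert a E, ({x} : Set (Fin d → ℤ)) + (B : Set (Fin d → ℤ)))
        = (({a} : Set (Fin d → ℤ)) + ((B : Set (Fin d → ℤ)) \ I)) ∪ S' := by
      rw [Finset.set_biUnion_insert]
      ext y
      constructor
      · rintro (hy | hy)
        · obtain ⟨b, hb, rfl⟩ := mem_singleton_add.1 hy
          by_cases h : a + b ∈ S'
          · exact Or.inr h
          · exact Or.inl (mem_singleton_add.2 ⟨b, ⟨hb, fun hbI => h hbI.2⟩, rfl⟩)
        · exact Or.inr hy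
      · rintro (hy | hy)
        · obtain ⟨b, hb, rfl⟩ := mem_singleton_add.1 hy
          exact Or.inl (mem_singleton_add.2 ⟨b, hb.1, rfl⟩)
        · exact Or.inr hy
    have hdisj : Disjoint (({a} : Set (Fin d → ℤ)) + ((B : Set (Fin d → ℤ)) \ I)) S' := by
      rw [Set.disjoint_left]
      intro y hy hy'
      obtain ⟨b, hb, rfl⟩ := mem_singleton_add.1 hy
      exact hb.2 ⟨hb.1, hy'⟩
    rw [hsplit]
    exact isDecomp_union (isDecomp_translate a (isDecomp_sdiff B hB I hIideal)) IH hdisj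

theorem ideal_fg (B : AddSubmonoid (Fin d → ℤ)) (hB : B.FG) (M : Set (Fin d → ℤ))
    (hM : IsIdeal B M) :
    ∃ E : Finset (Fin d → ℤ), (∀ x ∈ E, x ∈ M) ∧
      M = ⋃ x ∈ E, ({x} : Set (Fin d → ℤ)) + (B : Set (Fin d → ℤ)) := by
  classical
  have hwf := wf_ideals B hB
  have hgen_ideal : ∀ E : Finset (Fin d → ℤ), (∀ x ∈ E, x ∈ M) →
      IsIdeal B (⋃ x ∈ E, ({x} : Set (Fin d → ℤ)) + (B : Set (Fin d → ℤ))) := by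
    intro E hE
    constructor
    · intro y hy
      rw [Set.mem_iUnion₂] at hy
      obtain ⟨x, hx, hyx⟩ := hy
      obtain ⟨b, hb, rfl⟩ := mem_singleton_add.1 hyx
      exact B.add_mem (hM.1 (hE x hx)) hb
    · intro y hy c hc
      rw [Set.mem_iUnion₂] at hy ⊢
      obtain ⟨x, hx, hyx⟩ := hy
      obtain ⟨b, hb, rfl⟩ := mem_singleton_add.1 hyx
      exact ⟨x, hx, mem_singleton_add.2 ⟨b + c, B.add_mem hb hc, (add_assoc _ _ _).symm⟩⟩
  set fam : Set {I' : Set (Fin d → ℤ) // IsIdeal B I'} :=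
    {J | ∃ E : Finset (Fin d → ℤ), (∀ x ∈ E, x ∈ M) ∧
      J.1 = ⋃ x ∈ E, ({x} : Set (Fin d → ℤ)) + (B : Set (Fin d → ℤ))} with hfam
  have hfam_ne : fam.Nonempty :=
    ⟨⟨_, hgen_ideal ∅ (by simp)⟩, ∅, by simp, rfl⟩
  obtain ⟨Jm, ⟨E, hE, hJm⟩, hmax⟩ := hwf.has_min fam hfam_ne
  have hJmM : Jm.1 ⊆ M := by
    rw [hJm]
    intro y hy
    rw [Set.mem_iUnion₂] at hy
    obtain ⟨x, hx, hyx⟩ := hy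
    obtain ⟨b, hb, rfl⟩ := mem_singleton_add.1 hyx
    exact hM.2 _ (hE x hx) b hb
  have hMJm : M ⊆ Jm.1 := by
    by_contra hcon
    obtain ⟨y, hyM, hyJ⟩ := Set.not_subset.1 hcon
    have hE' : ∀ x ∈ insert y E, x ∈ M := by
      intro x hx
      rcases Finset.mem_insert.1 hx with rfl | hx
      · exact hyM
      · exact hE x hx
    have hmem : (⟨_, hgen_ideal (insert y E) hE'⟩ :
        {I' : Set (Fin d → ℤ) // IsIdeal B I'}) ∈ fam := ⟨insert y E, hE', rfl⟩
    have hnss := hmax _ hmem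
    refine hnss (HasSubset.Subset.ssubset_of_ne ?_ fun h => ?_)
    · rw [hJm]
      show (⋃ x ∈ E, ({x} : Set (Fin d → ℤ)) + (B : Set (Fin d → ℤ))) ⊆
        ⋃ x ∈ insert y E, ({x} : Set (Fin d → ℤ)) + (B : Set (Fin d → ℤ))
      rw [Finset.set_biUnion_insert]
      exact Set.subset_union_right
    · have hy' : y ∈ Jm.1 := by
        rw [h]
        show y ∈ ⋃ x ∈ insert y E, ({x} : Set (Fin d → ℤ)) + (B : Set (Fin d → ℤ))
        rw [Finset.set_biUnion_insert]
        exact Or.inl (mem_singleton_add.2 ⟨0, B.zero_mem, add_zero y⟩)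
      exact hyJ hy'
  exact ⟨E, hE, by rw [← hJm]; exact (Set.Subset.antisymm hMJm hJmM)⟩

end AffineStratificationAux

/-- If `M` is an ideal in an affine semigroup `A ⊆ ℤ^d` (i.e. `M ⊆ A` and
`M + A ⊆ M`), then `M` is a finite disjoint union of translates of faces of `A`,
where a face of `A` is a submonoid `F ≤ A` such that `a + b ∈ F` with `a, b ∈ A`
forces `a ∈ F` and `b ∈ F`. -/
theorem ideal_disjoint_union_of_translates_of_faces {d : ℕ}
    (A : AddSubmonoid (Fin d → ℤ)) (hA : A.FG)
    (M : Set (Fin d → ℤ)) (hMA : M ⊆ (A : Set (Fin d → ℤ)))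
    (hM : ∀ m ∈ M, ∀ a ∈ A, m + a ∈ M) :
    ∃ (r : ℕ) (f : Fin r → (Fin d → ℤ)) (F : Fin r → AddSubmonoid (Fin d → ℤ)),
      (∀ i, F i ≤ A ∧ ∀ a b, a ∈ A → b ∈ A → a + b ∈ F i → a ∈ F i ∧ b ∈ F i) ∧
      (Pairwise fun i j => Disjoint
        (({f i} : Set (Fin d → ℤ)) + (F i : Set (Fin d → ℤ)))
        (({f j} : Set (Fin d → ℤ)) + (F j : Set (Fin d → ℤ)))) ∧
      M = ⋃ i, (({f i} : Set (Fin d → ℤ)) + (F i : Set (Fin d → ℤ))) := by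
  obtain ⟨E, hE, hME⟩ :=
    AffineStratificationAux.ideal_fg A hA M ⟨hMA, hM⟩
  have h := AffineStratificationAux.isDecomp_biUnion A hA E
  rw [← hME] at h
  exact h
end

section
/- Every ideal M ⊆ ℕ^n has a Stanley decomposition: M can be written as a finite disjoint union M = ⨄ᵢ (aᵢ + ℕ^{Jᵢ}), where each aᵢ ∈ ℕ^n, each Jᵢ ⊆ {1, …, n}, and ℕ^{Jᵢ} = {x ∈ ℕ^n : xⱼ = 0 for all j ∉ Jᵢ} is the corresponding face of ℕ^n. -/
open Pointwise

def piece {n : ℕ} (a : Fin n → ℕ) (J : Set (Fin n)) : Set (Fin n → ℕ) :=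
  ({a} : Set (Fin n → ℕ)) + {x : Fin n → ℕ | ∀ k ∉ J, x k = 0}

lemma natPi_isPWO {n : ℕ} (s : Set (Fin n → ℕ)) : s.IsPWO :=
  Set.isPWO_of_wellQuasiOrderedLE s

lemma mem_piece {n : ℕ} (a : Fin n → ℕ) (J : Set (Fin n)) (z : Fin n → ℕ) :
    z ∈ ({a} : Set (Fin n → ℕ)) + {x : Fin n → ℕ | ∀ k ∉ J, x k = 0} ↔
      (∀ k, a k ≤ z k) ∧ ∀ k ∉ J, z k = a k := by
  constructor
  · rintro ⟨y, hy, x, hx, rfl⟩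
    rcases hy with rfl
    exact ⟨fun k => Nat.le_add_right _ _, fun k hk => by simp [Pi.add_apply, hx k hk]⟩
  · rintro ⟨h1, h2⟩
    refine ⟨a, rfl, z - a, fun k hk => ?_, ?_⟩
    · simp [Pi.sub_apply, h2 k hk]
    · funext k; simp [Pi.add_apply, Pi.sub_apply, Nat.add_sub_cancel' (h1 k)]

lemma chain_stab {n : ℕ} (Mk : ℕ → Set (Fin n → ℕ)) (hmono : Monotone Mk)
    (hid : ∀ k, ∀ m ∈ Mk k, ∀ x, m + x ∈ Mk k) :
    ∃ N, ∀ k, N ≤ k → Mk k = Mk N := by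
  classical
  set T : Set (Fin n → ℕ) := ⋃ k, Mk k with hT
  have hup : ∀ k, ∀ y ∈ Mk k, ∀ z, y ≤ z → z ∈ Mk k := by
    intro k y hy z hyz
    have : z = y + (z - y) := by
      funext i; simp [Pi.add_apply, Pi.sub_apply, Nat.add_sub_cancel' (hyz i)]
    rw [this]; exact hid k y hy _
  set Min : Set (Fin n → ℕ) := {m | m ∈ T ∧ ∀ y ∈ T, y ≤ m → y = m} with hMin
  have hbelow : ∀ x ∈ T, ∃ m ∈ Min, m ≤ x := by
    intro x hx
    have hwf : ({y ∈ T | y ≤ x}).IsWF := (natPi_isPWO _).isWF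
    have hne : ({y ∈ T | y ≤ x}).Nonempty := ⟨x, hx, le_refl x⟩
    refine ⟨hwf.min hne, ⟨(hwf.min_mem hne).1, ?_⟩, (hwf.min_mem hne).2⟩
    intro y hy hyle
    by_contra hne'
    exact hwf.not_lt_min hne ⟨hy, hyle.trans (hwf.min_mem hne).2⟩
      (lt_of_le_of_ne hyle hne')
  have hfin : Min.Finite := by
    by_contra hinf
    have hinf' : Min.Infinite := hinf
    set emb := hinf'.natEmbedding with hemb
    obtain ⟨i, j, hij, hle⟩ := (natPi_isPWO Min).exists_lt (f := fun k => (emb k : Fin n → ℕ))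
      (fun k => (emb k).2)
    have heq : ((emb i : Fin n → ℕ)) = (emb j : Fin n → ℕ) :=
      (emb j).2.2 _ (emb i).2.1 hle
    exact hij.ne (emb.injective (Subtype.ext heq))
  have hidx : ∀ m ∈ Min, ∃ k, m ∈ Mk k := fun m hm => Set.mem_iUnion.1 hm.1
  choose! g hg using hidx
  refine ⟨hfin.toFinset.sup g, fun k hk => Set.Subset.antisymm ?_ (hmono hk)⟩
  intro x hx
  obtain ⟨m, hmMin, hmx⟩ := hbelow x (Set.mem_iUnion.2 ⟨k, hx⟩)
  have hmN : m ∈ Mk (hfin.toFinset.sup g) :=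
    hmono (Finset.le_sup (hfin.mem_toFinset.2 hmMin)) (hg m hmMin)
  exact hup _ m hmN x hmx

lemma mem_piece' {n : ℕ} (a : Fin n → ℕ) (J : Set (Fin n)) (z : Fin n → ℕ) :
    z ∈ piece a J ↔ (∀ k, a k ≤ z k) ∧ ∀ k ∉ J, z k = a k := mem_piece a J z

lemma mem_piece_cons {n : ℕ} (k : ℕ) (a : Fin n → ℕ) (J : Set (Fin n)) (z : Fin (n+1) → ℕ) :
    z ∈ piece (Fin.cons k a) (Fin.succ '' J) ↔ z 0 = k ∧ Fin.tail z ∈ piece a J := by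
  have hnot0 : (0 : Fin (n+1)) ∉ Fin.succ '' J := by
    rintro ⟨j, -, hj⟩; exact Fin.succ_ne_zero j hj
  have hsucc : ∀ j : Fin n, j.succ ∈ Fin.succ '' J ↔ j ∈ J :=
    fun j => (Fin.succ_injective n).mem_set_image
  rw [mem_piece', mem_piece']
  constructor
  · rintro ⟨h1, h2⟩
    refine ⟨h2 0 hnot0, fun j => ?_, fun j hj => ?_⟩
    · simpa [Fin.tail] using h1 j.succ
    · simpa [Fin.tail] using h2 j.succ (fun h => hj ((hsucc j).1 h))
  · rintro ⟨hz0, h1, h2⟩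
    constructor
    · intro m
      refine Fin.cases ?_ (fun j => ?_) m
      · simp [hz0]
      · simpa [Fin.tail] using h1 j
    · intro m hm
      refine Fin.cases ?_ (fun j hj => ?_) m hm
      · simp [hz0]
      · simpa [Fin.tail] using h2 j (fun h => hj ((hsucc j).2 h))

lemma mem_piece_cons' {n : ℕ} (k : ℕ) (a : Fin n → ℕ) (J : Set (Fin n)) (z : Fin (n+1) → ℕ) :
    z ∈ piece (Fin.cons k a) (insert 0 (Fin.succ '' J)) ↔
      k ≤ z 0 ∧ Fin.tail z ∈ piece a J := by
  have hsucc : ∀ j : Fin n, j.succ ∈ insert (0 : Fin (n+1)) (Fin.succ '' J) ↔ j ∈ J := by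
    intro j
    simp [Set.mem_insert_iff, Fin.succ_ne_zero, (Fin.succ_injective n).mem_set_image]
  rw [mem_piece', mem_piece']
  constructor
  · rintro ⟨h1, h2⟩
    refine ⟨by simpa using h1 0, fun j => ?_, fun j hj => ?_⟩
    · simpa [Fin.tail] using h1 j.succ
    · simpa [Fin.tail] using h2 j.succ (fun h => hj ((hsucc j).1 h))
  · rintro ⟨hz0, h1, h2⟩
    constructor
    · intro m
      refine Fin.cases ?_ (fun j => ?_) m
      · simpa using hz0
      · simpa [Fin.tail] using h1 j
    · intro m hm
      refine Fin.cases ?_ (fun j hj => ?_) m hm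
      · intro h; exact absurd (Set.mem_insert _ _) h
      · simpa [Fin.tail] using h2 j (fun h => hj ((hsucc j).2 h))

lemma to_fin {n : ℕ} (M : Set (Fin n → ℕ)) (I : Type) [Fintype I]
    (A : I → (Fin n → ℕ)) (JJ : I → Set (Fin n))
    (h1 : Pairwise fun i j => Disjoint (piece (A i) (JJ i)) (piece (A j) (JJ j)))
    (h2 : M = ⋃ i, piece (A i) (JJ i)) :
    ∃ (r : ℕ) (a : Fin r → (Fin n → ℕ)) (J : Fin r → Set (Fin n)),
      (Pairwise fun i j => Disjoint (piece (a i) (J i)) (piece (a j) (J j))) ∧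
      M = ⋃ i, piece (a i) (J i) := by
  refine ⟨Fintype.card I, A ∘ (Fintype.equivFin I).symm, JJ ∘ (Fintype.equivFin I).symm,
    fun i j hij => h1 ((Fintype.equivFin I).symm.injective.ne hij), ?_⟩
  rw [h2, ← (Fintype.equivFin I).symm.surjective.iUnion_comp
    (fun i => piece (A i) (JJ i))]
  rfl

theorem stanley_aux (n : ℕ) (M : Set (Fin n → ℕ))
    (hM : ∀ m ∈ M, ∀ x : Fin n → ℕ, m + x ∈ M) :
    ∃ (r : ℕ) (a : Fin r → (Fin n → ℕ)) (J : Fin r → Set (Fin n)),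
      (Pairwise fun i j => Disjoint (piece (a i) (J i)) (piece (a j) (J j))) ∧
      M = ⋃ i, piece (a i) (J i) := by
  induction n with
  | zero =>
    by_cases hne : M.Nonempty
    · refine ⟨1, fun _ => 0, fun _ => ∅, ?_, ?_⟩
      · intro i j hij; exact absurd (Subsingleton.elim i j) hij
      · obtain ⟨m, hm⟩ := hne
        ext z
        have hz : z = m := Subsingleton.elim z m
        simp only [Set.mem_iUnion, mem_piece']
        constructor
        · intro _; exact ⟨0, fun k => k.elim0, fun k => k.elim0⟩
        · intro _; rw [hz]; exact hm
    · refine ⟨0, Fin.elim0, Fin.elim0, ?_, ?_⟩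
      · intro i; exact i.elim0
      · simp [Set.not_nonempty_iff_eq_empty.1 hne]
  | succ n ih =>
    set Mk : ℕ → Set (Fin n → ℕ) := fun k => {y | Fin.cons k y ∈ M} with hMk
    have hconsadd : ∀ (k l : ℕ) (y x : Fin n → ℕ),
        Fin.cons k y + Fin.cons l x = (Fin.cons (k + l) (y + x) : Fin (n+1) → ℕ) := by
      intro k l y x; funext m
      refine Fin.cases ?_ (fun j => ?_) m <;> simp
    have hid : ∀ k, ∀ m ∈ Mk k, ∀ x, m + x ∈ Mk k := by
      intro k y hy x
      have := hM _ hy (Fin.cons 0 x)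
      simpa [hMk, hconsadd] using this
    have hmono : Monotone Mk := by
      intro k l hkl y hy
      have := hM _ hy (Fin.cons (l - k) 0)
      simpa [hMk, hconsadd, Nat.add_sub_cancel' hkl] using this
    obtain ⟨N, hN⟩ := chain_stab Mk hmono hid
    choose r a J hdisj hunion using fun k : Fin N => ih (Mk k) (hid k)
    obtain ⟨r', a', J', hdisj', hunion'⟩ := ih (Mk N) (hid N)
    refine to_fin M ((Σ k : Fin N, Fin (r k)) ⊕ Fin r')
      (Sum.elim (fun p => Fin.cons (p.1 : ℕ) (a p.1 p.2)) (fun i => Fin.cons N (a' i)))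
      (Sum.elim (fun p => Fin.succ '' (J p.1 p.2)) (fun i => insert 0 (Fin.succ '' (J' i))))
      ?_ ?_
    · rintro (⟨k, i⟩ | i) (⟨l, j⟩ | j) hij <;>
        simp only [Sum.elim_inl, Sum.elim_inr] <;>
        rw [Set.disjoint_left] <;> intro z hz1 hz2
      · rw [mem_piece_cons] at hz1 hz2
        by_cases hkl : k = l
        · subst hkl
          have hij' : i ≠ j := by
            intro h; exact hij (by rw [h])
          exact Set.disjoint_left.1 (hdisj k hij') hz1.2 hz2.2
        · exact hkl (Fin.val_injective (hz1.1.symm.trans hz2.1))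
      · rw [mem_piece_cons] at hz1
        rw [mem_piece_cons'] at hz2
        have h1 := hz1.1
        have h2 := hz2.1
        have : (k : ℕ) < N := k.2
        omega
      · rw [mem_piece_cons'] at hz1
        rw [mem_piece_cons] at hz2
        have h1 := hz1.1
        have h2 := hz2.1
        have : (l : ℕ) < N := l.2
        omega
      · rw [mem_piece_cons'] at hz1 hz2
        have hij' : i ≠ j := fun h => hij (by rw [h])
        exact Set.disjoint_left.1 (hdisj' hij') hz1.2 hz2.2
    · ext z
      have hzM : z ∈ M ↔ Fin.tail z ∈ Mk (z 0) := by
        rw [hMk]; simp only [Set.mem_setOf_eq, Fin.cons_self_tail]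
      rw [Set.mem_iUnion, hzM]
      constructor
      · intro ht
        by_cases h : z 0 < N
        · rw [hunion ⟨z 0, h⟩] at ht
          obtain ⟨i, hi⟩ := Set.mem_iUnion.1 ht
          exact ⟨Sum.inl ⟨⟨z 0, h⟩, i⟩, (mem_piece_cons _ _ _ _).2 ⟨rfl, hi⟩⟩
        · rw [hN (z 0) (le_of_not_gt h), hunion'] at ht
          obtain ⟨i, hi⟩ := Set.mem_iUnion.1 ht
          exact ⟨Sum.inr i, (mem_piece_cons' _ _ _ _).2 ⟨le_of_not_gt h, hi⟩⟩
      · rintro ⟨(⟨k, i⟩ | i), hi⟩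
        · simp only [Sum.elim_inl] at hi
          rw [mem_piece_cons] at hi
          rw [hi.1]
          rw [hunion k]
          exact Set.mem_iUnion.2 ⟨i, hi.2⟩
        · simp only [Sum.elim_inr] at hi
          rw [mem_piece_cons'] at hi
          rw [hN (z 0) hi.1, hunion']
          exact Set.mem_iUnion.2 ⟨i, hi.2⟩


/-- Every ideal `M ⊆ ℕ^n` (a subset with `M + ℕ^n ⊆ M`) has a Stanley
decomposition: `M` is a finite disjoint union of translates `aᵢ + ℕ^{Jᵢ}` of
faces `ℕ^{Jᵢ} = {x ∈ ℕ^n : xⱼ = 0 for j ∉ Jᵢ}` of `ℕ^n`. -/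
theorem stanley_decomposition {n : ℕ} (M : Set (Fin n → ℕ))
    (hM : ∀ m ∈ M, ∀ x : Fin n → ℕ, m + x ∈ M) :
    ∃ (r : ℕ) (a : Fin r → (Fin n → ℕ)) (J : Fin r → Set (Fin n)),
      (Pairwise fun i j => Disjoint
        (({a i} : Set (Fin n → ℕ)) + {x : Fin n → ℕ | ∀ k ∉ J i, x k = 0})
        (({a j} : Set (Fin n → ℕ)) + {x : Fin n → ℕ | ∀ k ∉ J j, x k = 0})) ∧
      M = ⋃ i, (({a i} : Set (Fin n → ℕ)) + {x : Fin n → ℕ | ∀ k ∉ J i, x k = 0}) := by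
  exact stanley_aux n M hM
end

section
/- Fix a normal affine semigroup A ⊆ ℤ^d. For any subgroup L of the group ℤA generated by A, any u ∈ ℤ^d, and any ideal M ⊆ A, the intersection (u + L) ∩ M is a finitely generated module over the monoid L ∩ A; that is, there exists a finite set F ⊆ ℤ^d such that (u + L) ∩ M = F + (L ∩ A). -/
open Pointwise

set_option maxHeartbeats 1000000
set_option synthInstance.maxHeartbeats 400000

/-- The monomial subalgebra used in the proof below. -/
noncomputable def monomialSubalgebra {d : ℕ} (gens : Finset (Fin d → ℤ)) :
    Subalgebra ℤ (AddMonoidAlgebra ℤ (Fin d → ℤ)) :=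
  Algebra.adjoin ℤ ((fun a => (AddMonoidAlgebra.single a (1 : ℤ))) '' ↑gens)

theorem monomialSubalgebra_fg {d : ℕ} (gens : Finset (Fin d → ℤ)) :
    (monomialSubalgebra gens).FG := by
  classical
  rw [monomialSubalgebra, ← Finset.coe_image]
  exact Subalgebra.fg_adjoin_finset _

instance monomialSubalgebra_noetherian {d : ℕ} (gens : Finset (Fin d → ℤ)) :
    IsNoetherianRing ↥(monomialSubalgebra gens) :=
  isNoetherianRing_of_fg (monomialSubalgebra_fg gens)

/-- A normal affine semigroup: a finitely generated submonoid of `ℤ^d` that is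
saturated in the subgroup it generates (equivalently, the intersection of a
rational polyhedral cone with a sublattice of `ℤ^d`). -/
def IsNormalAffineSemigroup {d : ℕ} (A : AddSubmonoid (Fin d → ℤ)) : Prop :=
  A.FG ∧ ∀ (n : ℕ) (x : Fin d → ℤ), 0 < n →
    x ∈ AddSubgroup.closure (A : Set (Fin d → ℤ)) → n • x ∈ A → x ∈ A

/-- Let `A ⊆ ℤ^d` be a normal affine semigroup. For any subgroup `L` of the group
`ℤA` generated by `A`, any `u ∈ ℤ^d`, and any ideal `M ⊆ A`, the intersection
`(u + L) ∩ M` is a finitely generated module over the monoid `L ∩ A`. -/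
theorem coset_inter_ideal_fg_module {d : ℕ}
    (A : AddSubmonoid (Fin d → ℤ)) (hA : IsNormalAffineSemigroup A)
    (L : AddSubgroup (Fin d → ℤ))
    (hL : (L : Set (Fin d → ℤ)) ⊆ (AddSubgroup.closure (A : Set (Fin d → ℤ)) : Set (Fin d → ℤ)))
    (u : Fin d → ℤ)
    (M : Set (Fin d → ℤ)) (hMA : M ⊆ (A : Set (Fin d → ℤ)))
    (hM : ∀ m ∈ M, ∀ a ∈ A, m + a ∈ M) :
    ∃ F : Finset (Fin d → ℤ),
      (({u} : Set (Fin d → ℤ)) + (L : Set (Fin d → ℤ))) ∩ M =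
        (F : Set (Fin d → ℤ)) + ((L : Set (Fin d → ℤ)) ∩ (A : Set (Fin d → ℤ))) := by
  classical
  obtain ⟨gens, hgens⟩ := hA.1
  set Amb := AddMonoidAlgebra ℤ (Fin d → ℤ) with hAmbdef
  set R := monomialSubalgebra gens with hRdef
  -- Every element of `R` has support contained in `A`.
  have hsupp : ∀ f : Amb, f ∈ R → ∀ x ∈ f.coeff.support, x ∈ A := by
    intro f hf
    rw [hRdef, monomialSubalgebra] at hf
    induction hf using Algebra.adjoin_induction with
    | mem g hg =>
      obtain ⟨a, ha, rfl⟩ := hg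
      intro x hx
      rw [AddMonoidAlgebra.coeff_single] at hx
      have hxa : x = a := by
        have := Finsupp.support_single_subset hx
        simpa using this
      subst hxa
      exact hgens ▸ AddSubmonoid.subset_closure ha
    | algebraMap r =>
      intro x hx
      rw [AddMonoidAlgebra.coe_algebraMap, Function.comp_apply, AddMonoidAlgebra.coeff_single] at hx
      have hx0 : x = 0 := by
        have := Finsupp.support_single_subset hx
        simpa using this
      subst hx0; exact A.zero_mem
    | add g h hg hh ihg ihh =>
      intro x hx
      rcases Finset.mem_union.1 (Finsupp.support_add (AddMonoidAlgebra.coeff_add g h ▸ hx)) with h' | h'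
      · exact ihg x h'
      · exact ihh x h'
    | mul g h hg hh ihg ihh =>
      intro x hx
      have := AddMonoidAlgebra.support_coeff_mul_subset g h hx
      rcases Finset.mem_add.1 this with ⟨a, ha, b, hb, rfl⟩
      exact A.add_mem (ihg a ha) (ihh b hb)
  -- Every monomial with exponent in `A` belongs to `R`.
  have hmono : ∀ a ∈ A, (AddMonoidAlgebra.single a (1 : ℤ) : Amb) ∈ R := by
    intro a ha
    rw [← hgens] at ha
    induction ha using AddSubmonoid.closure_induction with
    | mem x hx =>
      rw [hRdef, monomialSubalgebra]
      exact Algebra.subset_adjoin ⟨x, hx, rfl⟩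
    | zero => simpa [← AddMonoidAlgebra.one_def] using R.one_mem
    | add x y hx hy ihx ihy =>
      have : (AddMonoidAlgebra.single (x + y) (1 : ℤ) : Amb)
          = AddMonoidAlgebra.single x 1 * AddMonoidAlgebra.single y 1 := by
        rw [AddMonoidAlgebra.single_mul_single, one_mul]
      rw [this]; exact R.mul_mem ihx ihy
  set S : Set (Fin d → ℤ) := (({u} : Set (Fin d → ℤ)) + (L : Set (Fin d → ℤ))) ∩ M with hSdef
  have hSA : ∀ s ∈ S, s ∈ A := fun s hs => hMA hs.2
  -- The set of corresponding monomials in `R`, and the ideal they generate.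
  set G : Set ↥R := {g | ∃ s ∈ S, (g : Amb) = AddMonoidAlgebra.single s 1} with hGdef
  set I : Ideal ↥R := Ideal.span G with hIdef
  obtain ⟨T, hT⟩ := IsNoetherian.noetherian I
  have hTmem : ∀ t ∈ T, ∃ Gt : Finset ↥R, ↑Gt ⊆ G ∧
      t ∈ Submodule.span ↥R (↑Gt : Set ↥R) := by
    intro t ht
    have : (t : ↥R) ∈ I := hT ▸ Submodule.subset_span ht
    exact Submodule.mem_span_finite_of_mem_span this
  choose Gt hGtsub hGtmem using hTmem
  set G0 : Finset ↥R := T.attach.biUnion (fun t => Gt t t.2) with hG0def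
  have hG0sub : (↑G0 : Set ↥R) ⊆ G := by
    intro g hg
    rcases Finset.mem_biUnion.1 hg with ⟨t, _, hgt⟩
    exact hGtsub t t.2 hgt
  have hspan : I = Submodule.span ↥R (↑G0 : Set ↥R) := by
    apply le_antisymm
    · rw [← hT]
      apply Submodule.span_le.2
      intro t ht
      refine Submodule.span_mono ?_ (hGtmem t ht)
      intro g hg
      exact Finset.mem_coe.2 (Finset.mem_biUnion.2 ⟨⟨t, ht⟩, Finset.mem_attach _ _, hg⟩)
    · exact Submodule.span_le.2 (fun g hg => Ideal.subset_span (hG0sub hg))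
  -- Pick the exponent of each monomial generator.
  choose! sg hsgS hsgeq using fun (g : ↥R) (hg : g ∈ G) => hg
  refine ⟨G0.image sg, ?_⟩
  ext x
  constructor
  · -- x ∈ S implies x ∈ F + (L ∩ A)
    intro hx
    have hxS : x ∈ S := hx
    have hxA : x ∈ A := hSA x hxS
    set m : ↥R := ⟨AddMonoidAlgebra.single x 1, hmono x hxA⟩ with hmdef
    have hmG : m ∈ G := ⟨x, hxS, rfl⟩
    have hmI : m ∈ I := Ideal.subset_span hmG
    rw [hspan] at hmI
    obtain ⟨c, -, hc⟩ := Submodule.mem_span_finset.1 hmI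
    -- push to the ambient algebra
    have heq : (AddMonoidAlgebra.single x (1 : ℤ) : Amb)
        = ∑ g ∈ G0, ((c g : Amb) * (g : Amb)) := by
      have := congrArg (Subalgebra.val R) hc
      simp only [map_sum, smul_eq_mul, map_mul] at this
      exact this.symm
    -- evaluate the coefficient at `x`
    have h1 : (1 : ℤ) = ∑ g ∈ G0, (c g : Amb).coeff (x - sg g) := by
      have happ := congrArg (fun f : Amb => f.coeff x) heq
      simp only [AddMonoidAlgebra.coeff_single, Finsupp.single_eq_same] at happ
      rw [happ, AddMonoidAlgebra.coeff_sum, Finsupp.finset_sum_apply]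
      refine Finset.sum_congr rfl (fun g hg => ?_)
      rw [hsgeq g (hG0sub hg)]
      rw [AddMonoidAlgebra.coeff_mul_single_apply, mul_one, sub_eq_add_neg]
    have hne : ∃ g ∈ G0, (c g : Amb).coeff (x - sg g) ≠ 0 := by
      by_contra h
      push_neg at h
      have : (1 : ℤ) = 0 := by
        rw [h1]; exact Finset.sum_eq_zero h
      exact one_ne_zero this
    obtain ⟨g, hgG0, hgne⟩ := hne
    have hdA : x - sg g ∈ A := by
      refine hsupp (c g : Amb) (c g).2 _ ?_
      exact Finsupp.mem_support_iff.2 hgne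
    have hsgmem : sg g ∈ S := hsgS g (hG0sub hgG0)
    have hdL : x - sg g ∈ L := by
      obtain ⟨u1, hu1, l1, hl1, hxl⟩ := hxS.1
      obtain ⟨u2, hu2, l2, hl2, hsl⟩ := hsgmem.1
      rcases Set.mem_singleton_iff.1 hu1 with rfl
      rcases Set.mem_singleton_iff.1 hu2 with rfl
      have : x - sg g = l1 - l2 := by
        rw [← hxl, ← hsl]; exact add_sub_add_left_eq_sub l1 l2 u2
      rw [this]
      exact L.sub_mem hl1 hl2
    refine ⟨sg g, ?_, x - sg g, ⟨hdL, hdA⟩, by simp⟩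
    exact Finset.mem_coe.2 (Finset.mem_image.2 ⟨g, hgG0, rfl⟩)
  · -- F + (L ∩ A) ⊆ S
    rintro ⟨f, hf, b, hb, rfl⟩
    rcases Finset.mem_image.1 (Finset.mem_coe.1 hf) with ⟨g, hgG0, rfl⟩
    have hfS : sg g ∈ S := hsgS g (hG0sub hgG0)
    constructor
    · obtain ⟨u1, hu1, l1, hl1, hxl⟩ := hfS.1
      rcases Set.mem_singleton_iff.1 hu1 with rfl
      exact ⟨u1, rfl, l1 + b, L.add_mem hl1 hb.1, by show u1 + (l1 + b) = sg g + b; rw [← add_assoc, show u1 + l1 = sg g from hxl]⟩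
    · exact hM _ hfS.2 b hb.2
end
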